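/- arXiv:1304.5108 — 2 statements merged into one kernel-verified Lean document; each statement's English description precedes it below -/
import Mathlib

section
/- Let L be the abelian group on generators x₁, x₂, x₃ with relations 2x₁ = 2x₂ = n·x₃ = c (n ≥ 2). Define x ≥ 0 if and only if l ≥ 0, where x = l₁x₁ + l₂x₂ + l₃x₃ + l·c is the normal form of x. Then for ω := c − x₁ − x₂ − x₃, every x ∈ L satisfies exactly one of the two conditions: x ≥ 0, or x ≤ ω + c. -/
/-- The subgroup of relations `2x₁ = 2x₂` and `2x₁ = n·x₃` inside ℤ³. -/
def rel (n : ℕ) : AddSubgroup (ℤ × ℤ × ℤ) :=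
  AddSubgroup.closure {(2, -2, 0), (2, 0, -(n : ℤ))}

/-- The rank one abelian group `L = ⟨x₁,x₂,x₃ | 2x₁ = 2x₂ = n·x₃⟩`. -/
abbrev L (n : ℕ) := (ℤ × ℤ × ℤ) ⧸ rel n

/-- The generator x₁ of L. -/
def x1 (n : ℕ) : L n := QuotientAddGroup.mk' (rel n) (1, 0, 0)

/-- The generator x₂ of L. -/
def x2 (n : ℕ) : L n := QuotientAddGroup.mk' (rel n) (0, 1, 0)

/-- The generator x₃ of L. -/
def x3 (n : ℕ) : L n := QuotientAddGroup.mk' (rel n) (0, 0, 1)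

/-- The canonical element c = 2x₁ (= 2x₂ = n·x₃). -/
def cc (n : ℕ) : L n := (2 : ℤ) • x1 n

/-- The dualizing element ω = c - x₁ - x₂ - x₃. -/
def om (n : ℕ) : L n := cc n - x1 n - x2 n - x3 n

/-- `x ≥ 0` in L: the coefficient of `c` in the (unique) normal form
`x = l₁x₁ + l₂x₂ + l₃x₃ + l·c` (with 0 ≤ l₁,l₂ ≤ 1, 0 ≤ l₃ ≤ n-1) is nonnegative. -/
def Nonneg (n : ℕ) (x : L n) : Prop :=
  ∃ l1 l2 l3 l : ℤ, 0 ≤ l1 ∧ l1 ≤ 1 ∧ 0 ≤ l2 ∧ l2 ≤ 1 ∧ 0 ≤ l3 ∧ l3 ≤ (n : ℤ) - 1 ∧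
    0 ≤ l ∧ x = l1 • x1 n + l2 • x2 n + l3 • x3 n + l • cc n

/-- The order on L: `x ≤ y` iff `y - x ≥ 0`. -/
def leL (n : ℕ) (x y : L n) : Prop := Nonneg n (y - x)

/-- Membership in the relation subgroup, explicitly. -/
lemma mem_rel_iff {n : ℕ} (v : ℤ × ℤ × ℤ) :
    v ∈ rel n ↔ ∃ α β : ℤ, v = (2*α + 2*β, -2*α, -β*(n:ℤ)) := by
  rw [rel, AddSubgroup.mem_closure_pair]
  constructor
  · rintro ⟨α, β, rfl⟩
    exact ⟨α, β, by simp [Prod.ext_iff]; constructor <;> ring⟩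
  · rintro ⟨α, β, rfl⟩
    exact ⟨α, β, by simp [Prod.ext_iff]; constructor <;> ring⟩

lemma mk_eq_mk_iff {n : ℕ} (v w : ℤ × ℤ × ℤ) :
    QuotientAddGroup.mk' (rel n) v = QuotientAddGroup.mk' (rel n) w ↔ v - w ∈ rel n := by
  rw [QuotientAddGroup.mk'_eq_mk']
  constructor
  · rintro ⟨z, hz, rfl⟩; simpa using hz
  · intro h; exact ⟨w - v, by simpa using (rel n).neg_mem h, by abel⟩

lemma combo (n : ℕ) (l1 l2 l3 l : ℤ) :
    l1 • x1 n + l2 • x2 n + l3 • x3 n + l • cc n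
      = QuotientAddGroup.mk' (rel n) (l1 + 2*l, l2, l3) := by
  have h : ((l1 + 2*l, l2, l3) : ℤ × ℤ × ℤ)
      = l1 • (1, 0, 0) + l2 • (0, 1, 0) + l3 • (0, 0, 1) + l • ((2:ℤ) • (1, 0, 0)) := by
    simp [Prod.ext_iff]; ring
  simp only [x1, x2, x3, cc, h, map_add, map_zsmul]

lemma ediv_small {a m : ℤ} (h0 : 0 ≤ a) (h1 : a < m) : a / m = 0 :=
  Int.ediv_eq_zero_of_lt h0 h1

lemma ediv_neg_one_sub (b : ℤ) {m : ℤ} (hm : 0 < m) : (-1 - b) / m = -1 - b / m := by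
  have h1 := Int.emod_nonneg b (ne_of_gt hm)
  have h2 := Int.emod_lt_of_pos b hm
  have h3 := Int.mul_ediv_add_emod b m
  have key : -1 - b = (m - 1 - b % m) + m * (-1 - b / m) := by ring_nf; omega
  rw [key, Int.add_mul_ediv_left _ _ (ne_of_gt hm), ediv_small (by omega) (by omega), zero_add]

/-- The key characterization: `mk (a,b,c) ≥ 0` iff the `c`-coefficient of its normal form,
namely `(a + 2⌊b/2⌋ + 2⌊c/n⌋)/2`, is nonnegative. -/
lemma nonneg_iff {n : ℕ} (hn : 2 ≤ n) (a b c : ℤ) :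
    Nonneg n (QuotientAddGroup.mk' (rel n) (a, b, c)) ↔
      0 ≤ (a + 2*(b/2) + 2*(c/(n:ℤ))) / 2 := by
  have hnpos : (0:ℤ) < n := by exact_mod_cast Nat.lt_of_lt_of_le Nat.zero_lt_two hn
  constructor
  · rintro ⟨l1, l2, l3, l, h10, h11, h20, h21, h30, h31, hl, hx⟩
    rw [combo, mk_eq_mk_iff, mem_rel_iff] at hx
    obtain ⟨α, β, hv⟩ := hx
    have e1 : a - (l1 + 2*l) = 2*α + 2*β := congrArg Prod.fst hv
    have e2 : b - l2 = -2*α := congrArg (Prod.fst ∘ Prod.snd) hv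
    have e3 : c - l3 = -β*(n:ℤ) := congrArg (Prod.snd ∘ Prod.snd) hv
    have hb : b / 2 = -α := by
      have : b = l2 + 2*(-α) := by omega
      rw [this, Int.add_mul_ediv_left _ _ (by norm_num : (2:ℤ) ≠ 0),
        ediv_small h20 (by omega), zero_add]
    have hc : c / (n:ℤ) = -β := by
      have : c = l3 + (n:ℤ)*(-β) := by linarith
      rw [this, Int.add_mul_ediv_left _ _ (ne_of_gt hnpos),
        ediv_small h30 (by omega), zero_add]
    have hA : a + 2*(b/2) + 2*(c/(n:ℤ)) = l1 + 2*l := by rw [hb, hc]; omega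
    rw [hA, Int.add_mul_ediv_left _ _ (by norm_num : (2:ℤ) ≠ 0),
      ediv_small h10 (by omega), zero_add]
    exact hl
  · intro hl
    set A := a + 2*(b/2) + 2*(c/(n:ℤ)) with hA
    refine ⟨A % 2, b % 2, c % (n:ℤ), A / 2, Int.emod_nonneg A (by norm_num),
      by omega, Int.emod_nonneg b (by norm_num), by omega,
      Int.emod_nonneg c (ne_of_gt hnpos), by have := Int.emod_lt_of_pos c hnpos; omega, hl, ?_⟩
    rw [combo, mk_eq_mk_iff, mem_rel_iff]
    refine ⟨-(b/2), -(c/(n:ℤ)), ?_⟩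
    have h2 := Int.mul_ediv_add_emod b 2
    have h3 := Int.mul_ediv_add_emod c (n:ℤ)
    have h4 := Int.mul_ediv_add_emod A 2
    simp only [Prod.ext_iff, Prod.fst_sub, Prod.snd_sub]
    refine ⟨by omega, by omega, by linarith⟩

/-- every x ∈ L satisfies exactly one of `x ≥ 0` or `x ≤ ω + c`. -/
theorem trichotomy (n : ℕ) (hn : 2 ≤ n) (x : L n) :
    Xor' (Nonneg n x) (leL n x (om n + cc n)) := by
  have hnpos : (0:ℤ) < n := by exact_mod_cast Nat.lt_of_lt_of_le Nat.zero_lt_two hn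
  induction x using QuotientAddGroup.induction_on with
  | H z =>
    obtain ⟨a, b, c⟩ := z
    have hmk : (QuotientAddGroup.mk (a, b, c) : L n) = QuotientAddGroup.mk' (rel n) (a, b, c) := rfl
    have hrest : om n + cc n - QuotientAddGroup.mk' (rel n) (a, b, c)
        = QuotientAddGroup.mk' (rel n) (3 - a, -1 - b, -1 - c) := by
      have h1 : om n + cc n = QuotientAddGroup.mk' (rel n) (3, -1, -1) := by
        rw [om, cc]
        rw [show ((3:ℤ), (-1:ℤ), (-1:ℤ)) = ((1:ℤ) + 2*1, (-1:ℤ), (-1:ℤ)) by norm_num,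
          ← combo n 1 (-1) (-1) 1]
        simp only [one_smul, neg_smul]
        abel
      rw [h1, ← map_sub]
      congr 1
    rw [leL, hmk, hrest, nonneg_iff hn, nonneg_iff hn,
      ediv_neg_one_sub b (by norm_num), ediv_neg_one_sub c hnpos]
    have key : 3 - a + 2 * (-1 - b / 2) + 2 * (-1 - c / (n:ℤ))
        = -1 - (a + 2*(b/2) + 2*(c/(n:ℤ))) := by ring
    rw [key, ediv_neg_one_sub _ (by norm_num : (0:ℤ) < 2)]
    unfold Xor' Xor
    omega
end

section
/- Let L = ⟨x₁,x₂,x₃ | 2x₁=2x₂=n x₃ = c⟩ with n ≥ 2. Suppose I ⊆ L is a finite subset with 0 ∈ I such that every element x ∈ I satisfies either 0 ≤ x ≤ c or x = x₁ − x₂, and such that I contains no pair {k x₃, x₁ − x₂} with k ≥ 1. If |I| = n + 3, then I = {x ∈ L : 0 ≤ x ≤ c}. -/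
noncomputable instance (n : ℕ) : DecidableEq (L n) := Classical.decEq _

lemma mem_rel (n : ℕ) (hn : n ≠ 0) (v : ℤ × ℤ × ℤ) :
    v ∈ rel n ↔ Even v.2.1 ∧ (n : ℤ) ∣ v.2.2 ∧
      (n : ℤ) * v.1 + n * v.2.1 + 2 * v.2.2 = 0 := by
  constructor
  · intro h
    refine AddSubgroup.closure_induction ?_ ?_ ?_ ?_ h
    · rintro x (rfl | rfl)
      · exact ⟨⟨-1, by ring⟩, ⟨0, by ring⟩, by ring⟩
      · exact ⟨⟨0, by ring⟩, ⟨-1, by ring⟩, by simp only [Prod.mk_sub_mk]; push_cast; ring⟩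
    · exact ⟨Even.zero, dvd_zero _, by simp⟩
    · rintro x y - - ⟨hx1, hx2, hx3⟩ ⟨hy1, hy2, hy3⟩
      exact ⟨hx1.add hy1, dvd_add hx2 hy2, by simp only [Prod.snd_add, Prod.fst_add]; linarith⟩
    · rintro x - ⟨hx1, hx2, hx3⟩
      exact ⟨hx1.neg, hx2.neg_right, by simp only [Prod.snd_neg, Prod.fst_neg]; linarith⟩
  · rintro ⟨⟨a, ha⟩, ⟨b, hb⟩, h3⟩
    obtain ⟨p, q, r⟩ := v
    simp only at ha hb h3
    have : (p, q, r) = (-a) • ((2 : ℤ), (-2 : ℤ), (0:ℤ)) + (-b) • ((2:ℤ), (0:ℤ), -(n:ℤ)) := by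
      have hn' : (0:ℤ) < n := by positivity
      subst ha hb
      have hp : p = -a - a - (b + b) := by
        have := h3
        nlinarith [this]
      simp [Prod.ext_iff, smul_eq_mul]
      constructor
      · linarith
      constructor
      · ring
      · ring
    rw [this]
    exact add_mem (zsmul_mem (AddSubgroup.subset_closure (by simp)) _)
      (zsmul_mem (AddSubgroup.subset_closure (by simp)) _)

lemma mk_eq (n : ℕ) (hn : n ≠ 0) (a b : ℤ × ℤ × ℤ) :
    QuotientAddGroup.mk' (rel n) a = QuotientAddGroup.mk' (rel n) b ↔
      Even (a.2.1 - b.2.1) ∧ (n : ℤ) ∣ (a.2.2 - b.2.2) ∧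
        (n : ℤ) * (a.1 - b.1) + n * (a.2.1 - b.2.1) + 2 * (a.2.2 - b.2.2) = 0 := by
  rw [QuotientAddGroup.mk'_eq_mk']
  constructor
  · rintro ⟨z, hz, rfl⟩
    have := (mem_rel n hn z).mp hz
    obtain ⟨h1, h2, h3⟩ := this
    refine ⟨?_, ?_, ?_⟩
    · simpa using h1.neg
    · simpa using h2.neg_right
    · simp only [Prod.fst_add, Prod.snd_add]; linarith
  · intro h
    refine ⟨b - a, (mem_rel n hn _).mpr ?_, by abel⟩
    obtain ⟨h1, h2, h3⟩ := h
    refine ⟨?_, ?_, ?_⟩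
    · simpa using h1.neg
    · simpa using h2.neg_right
    · simp only [Prod.fst_sub, Prod.snd_sub]; linarith

lemma coord (n : ℕ) (l1 l2 l3 l : ℤ) :
    l1 • x1 n + l2 • x2 n + l3 • x3 n + l • cc n =
      QuotientAddGroup.mk' (rel n) (l1 + 2 * l, l2, l3) := by
  have : ∀ v : ℤ × ℤ × ℤ, ∀ m : ℤ, m • (QuotientAddGroup.mk' (rel n) v) =
      QuotientAddGroup.mk' (rel n) (m • v) := fun v m => (map_zsmul _ m v).symm
  simp only [x1, x2, x3, cc, this, ← map_add]
  congr 1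
  simp [Prod.ext_iff, smul_eq_mul]
  ring

lemma mk_sub (n : ℕ) (a b : ℤ × ℤ × ℤ) :
    QuotientAddGroup.mk' (rel n) a - QuotientAddGroup.mk' (rel n) b =
      QuotientAddGroup.mk' (rel n) (a - b) := (map_sub _ _ _).symm

lemma cc_eq (n : ℕ) : cc n = QuotientAddGroup.mk' (rel n) (2, 0, 0) := by
  have h := coord n 0 0 0 1
  simp only [zero_smul, one_smul, zero_add] at h
  simpa using h

lemma zero_eq (n : ℕ) : (0 : L n) = QuotientAddGroup.mk' (rel n) (0, 0, 0) := (map_zero _).symm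

lemma smul_x3 (n : ℕ) (k : ℤ) : k • x3 n = QuotientAddGroup.mk' (rel n) (0, 0, k) := by
  rw [x3, ← map_zsmul]
  congr 1
  simp [Prod.ext_iff]

lemma nonneg_mk (n : ℕ) (v : ℤ × ℤ × ℤ) (l1 l2 l3 l : ℤ)
    (h1 : 0 ≤ l1) (h2 : l1 ≤ 1) (h3 : 0 ≤ l2) (h4 : l2 ≤ 1) (h5 : 0 ≤ l3)
    (h6 : l3 ≤ (n:ℤ) - 1) (h7 : 0 ≤ l)
    (heq : QuotientAddGroup.mk' (rel n) v = QuotientAddGroup.mk' (rel n) (l1 + 2*l, l2, l3)) :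
    Nonneg n (QuotientAddGroup.mk' (rel n) v) :=
  ⟨l1, l2, l3, l, h1, h2, h3, h4, h5, h6, h7, by rw [coord]; exact heq⟩

def F (n : ℕ) (k : ℕ) : L n :=
  if k = n + 1 then x1 n else if k = n + 2 then x2 n else (k : ℤ) • x3 n

noncomputable def S (n : ℕ) : Finset (L n) :=
  (Finset.range (n + 3)).image (F n)

lemma F_interval (n : ℕ) (hn : 2 ≤ n) (k : ℕ) (hk : k < n + 3) :
    leL n 0 (F n k) ∧ leL n (F n k) (cc n) := by
  have hn0 : n ≠ 0 := by omega
  unfold F leL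
  rcases eq_or_ne k (n+1) with rfl | h1
  · simp only [if_pos rfl, x1, sub_zero, cc_eq, mk_sub]
    constructor
    · exact nonneg_mk n _ 1 0 0 0 (by norm_num) (by norm_num) (by norm_num) (by norm_num)
        (by norm_num) (by push_cast; omega) (by norm_num) (by norm_num)
    · refine nonneg_mk n _ 1 0 0 0 (by norm_num) (by norm_num) (by norm_num) (by norm_num)
        (by norm_num) (by push_cast; omega) (by norm_num) ?_
      norm_num
      rfl
  · rcases eq_or_ne k (n+2) with rfl | h2
    · simp only [if_neg h1, if_pos rfl, x2, sub_zero, cc_eq, mk_sub]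
      constructor
      · exact nonneg_mk n _ 0 1 0 0 (by norm_num) (by norm_num) (by norm_num) (by norm_num)
          (by norm_num) (by push_cast; omega) (by norm_num) (by norm_num)
      · refine nonneg_mk n _ 0 1 0 0 (by norm_num) (by norm_num) (by norm_num) (by norm_num)
          (by norm_num) (by push_cast; omega) (by norm_num) ?_
        rw [mk_eq n hn0]
        refine ⟨⟨-1, by norm_num⟩, by norm_num, by simp only [Prod.mk_sub_mk]; push_cast; ring⟩
    · have hkn : k ≤ n := by omega
      simp only [if_neg h1, if_neg h2, smul_x3, sub_zero, cc_eq, mk_sub]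
      constructor
      · rcases eq_or_ne k n with hkeq | hlt
        · subst hkeq
          refine nonneg_mk k _ 0 0 0 1 (by norm_num) (by norm_num) (by norm_num) (by norm_num)
            (by norm_num) (by push_cast; omega) (by norm_num) ?_
          rw [mk_eq k hn0]
          exact ⟨⟨0, by norm_num⟩, ⟨1, by norm_num⟩, by simp only [Prod.mk_sub_mk]; push_cast; ring⟩
        · refine nonneg_mk n _ 0 0 (k:ℤ) 0 (by norm_num) (by norm_num) (by norm_num) (by norm_num)
            (by positivity) (by push_cast; omega) (by norm_num) ?_
          norm_num
      · rcases eq_or_ne k 0 with rfl | hk0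
        · refine nonneg_mk n _ 0 0 0 1 (by norm_num) (by norm_num) (by norm_num) (by norm_num)
            (by norm_num) (by push_cast; omega) (by norm_num) ?_
          norm_num
          rfl
        · refine nonneg_mk n _ 0 0 ((n:ℤ) - k) 0 (by norm_num) (by norm_num) (by norm_num)
            (by norm_num) (by push_cast; omega) (by push_cast; omega) (by norm_num) ?_
          rw [mk_eq n hn0]
          refine ⟨⟨0, by norm_num⟩, ⟨-1, by simp only [Prod.mk_sub_mk]; push_cast; ring⟩, by simp only [Prod.mk_sub_mk]; push_cast; ring⟩

lemma interval_mem_S (n : ℕ) (hn : 2 ≤ n) (x : L n)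
    (h0x : leL n 0 x) (hxc : leL n x (cc n)) : x ∈ S n := by
  have hn0 : n ≠ 0 := by omega
  have hnz : (n : ℤ) ≠ 0 := by exact_mod_cast hn0
  have h2n : (2 : ℤ) ≤ (n : ℤ) := by exact_mod_cast hn
  rw [leL, sub_zero] at h0x
  obtain ⟨l1, l2, l3, l, b1, b2, b3, b4, b5, b6, b7, hx⟩ := h0x
  rw [coord] at hx
  rw [leL] at hxc
  obtain ⟨m1, m2, m3, m, c1, c2, c3, c4, c5, c6, c7, hy⟩ := hxc
  rw [coord, hx, cc_eq, mk_sub, mk_eq n hn0] at hy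
  obtain ⟨⟨e, he⟩, ⟨t, ht⟩, heq3⟩ := hy
  simp only [Prod.mk_sub_mk] at he ht heq3
  have ht0 : t ≤ 0 := by nlinarith
  have ht1 : -1 ≤ t := by nlinarith
  have key : (n : ℤ) * ((2 - (l1 + 2*l) - (m1 + 2*m)) + (-l2 - m2) + 2*t) = 0 := by
    linear_combination heq3 - 2 * ht
  have hE : (2 - (l1 + 2*l) - (m1 + 2*m)) + (-l2 - m2) + 2*t = 0 :=
    (mul_eq_zero.mp key).resolve_left hnz
  have hcases : (l1 = 0 ∧ l2 = 0 ∧ l3 = 0 ∧ l = 0) ∨ (l1 = 1 ∧ l2 = 0 ∧ l3 = 0 ∧ l = 0) ∨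
      (l1 = 0 ∧ l2 = 1 ∧ l3 = 0 ∧ l = 0) ∨ (l1 = 0 ∧ l2 = 0 ∧ l3 = 0 ∧ l = 1) ∨
      (l1 = 0 ∧ l2 = 0 ∧ 1 ≤ l3 ∧ l3 ≤ (n:ℤ) - 1 ∧ l = 0) := by
    rcases (by omega : t = 0 ∨ t = -1) with rfl | rfl
    · have hsum : l3 + m3 = 0 := by linarith
      omega
    · have hsum : l3 + m3 = (n : ℤ) := by linarith
      omega
  have hmem : ∀ j : ℕ, j < n + 3 → F n j = x → x ∈ S n := by
    intro j hj hF
    exact Finset.mem_image.mpr ⟨j, Finset.mem_range.mpr hj, hF⟩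
  rcases hcases with ⟨rfl, rfl, rfl, rfl⟩ | ⟨rfl, rfl, rfl, rfl⟩ | ⟨rfl, rfl, rfl, rfl⟩ |
    ⟨rfl, rfl, rfl, rfl⟩ | ⟨rfl, rfl, hl3a, hl3b, rfl⟩
  · refine hmem 0 (by omega) ?_
    rw [F, if_neg (by omega), if_neg (by omega), smul_x3, hx]
    norm_num
  · refine hmem (n+1) (by omega) ?_
    rw [F, if_pos rfl, x1, hx]
    norm_num
  · refine hmem (n+2) (by omega) ?_
    rw [F, if_neg (by omega), if_pos rfl, x2, hx]
    norm_num
  · refine hmem n (by omega) ?_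
    rw [F, if_neg (by omega), if_neg (by omega), smul_x3, hx, mk_eq n hn0]
    refine ⟨⟨0, by norm_num⟩, ⟨1, by norm_num⟩, by push_cast; ring⟩
  · refine hmem l3.toNat (by omega) ?_
    rw [F, if_neg (by omega), if_neg (by omega), smul_x3, hx]
    rw [Int.toNat_of_nonneg b5]
    norm_num

lemma F_inj (n : ℕ) (hn : 2 ≤ n) : Set.InjOn (F n) (Finset.range (n + 3)) := by
  have hn0 : n ≠ 0 := by omega
  suffices h : ∀ j k : ℕ, j < n + 3 → k < n + 3 → j ≤ k → F n j = F n k → j = k by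
    intro j hj k hk hF
    simp only [Finset.coe_range, Set.mem_Iio] at hj hk
    rcases le_total j k with hjk | hjk
    · exact h j k hj hk hjk hF
    · exact (h k j hk hj hjk hF.symm).symm
  intro j k hj hk hjk hF
  by_contra hne
  rcases eq_or_ne k (n+1) with rfl | k1
  · have hjn : j ≤ n := by omega
    rw [F, F, if_pos rfl, if_neg (by omega), if_neg (by omega), smul_x3, x1, mk_eq n hn0] at hF
    obtain ⟨-, ⟨t, ht⟩, h3⟩ := hF
    simp only at ht h3
    have : (n:ℤ) * (2*t - 1) = 0 := by linear_combination h3 - 2*ht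
    have := (mul_eq_zero.mp this).resolve_left (by exact_mod_cast hn0)
    omega
  · rcases eq_or_ne k (n+2) with rfl | k2
    · rcases eq_or_ne j (n+1) with rfl | j1
      · rw [F, F, if_pos rfl, if_neg (by omega), if_pos rfl, x1, x2, mk_eq n hn0] at hF
        obtain ⟨⟨e, he⟩, -, -⟩ := hF
        simp only at he
        omega
      · have hjn : j ≤ n := by omega
        rw [F, F, if_neg (by omega), if_neg (by omega), if_neg (by omega), if_pos rfl,
          smul_x3, x2, mk_eq n hn0] at hF
        obtain ⟨⟨e, he⟩, -, -⟩ := hF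
        simp only at he
        omega
    · have hkn : k ≤ n := by omega
      have hjn : j ≤ n := by omega
      rw [F, F, if_neg (by omega), if_neg (by omega), if_neg (by omega), if_neg (by omega),
        smul_x3, smul_x3, mk_eq n hn0] at hF
      obtain ⟨-, -, h3⟩ := hF
      simp only at h3
      omega

lemma S_card (n : ℕ) (hn : 2 ≤ n) : (S n).card = n + 3 := by
  rw [S, Finset.card_image_of_injOn (F_inj n hn), Finset.card_range]

lemma x12_not_mem_S (n : ℕ) (hn : 2 ≤ n) : x1 n - x2 n ∉ S n := by
  have hn0 : n ≠ 0 := by omega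
  intro h
  obtain ⟨k, hk, hF⟩ := Finset.mem_image.mp h
  rw [Finset.mem_range] at hk
  rw [x1, x2, mk_sub] at hF
  rcases eq_or_ne k (n+1) with rfl | k1
  · rw [F, if_pos rfl, x1, mk_eq n hn0] at hF
    obtain ⟨⟨e, he⟩, -, -⟩ := hF
    simp only [Prod.mk_sub_mk] at he
    omega
  · rcases eq_or_ne k (n+2) with rfl | k2
    · rw [F, if_neg (by omega), if_pos rfl, x2, mk_eq n hn0] at hF
      obtain ⟨-, -, h3⟩ := hF
      simp only [Prod.mk_sub_mk] at h3
      omega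
    · rw [F, if_neg k1, if_neg k2, smul_x3, mk_eq n hn0] at hF
      obtain ⟨⟨e, he⟩, -, -⟩ := hF
      simp only [Prod.mk_sub_mk] at he
      omega

lemma n_smul_x3 (n : ℕ) (hn : 2 ≤ n) : (n : ℤ) • x3 n = cc n := by
  have hn0 : n ≠ 0 := by omega
  rw [smul_x3, cc_eq, mk_eq n hn0]
  exact ⟨⟨0, by norm_num⟩, ⟨1, by norm_num⟩, by push_cast; ring⟩

lemma x3_mem_S (n : ℕ) (hn : 2 ≤ n) : x3 n ∈ S n := by
  refine Finset.mem_image.mpr ⟨1, Finset.mem_range.mpr (by omega), ?_⟩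
  rw [F, if_neg (by omega), if_neg (by omega)]
  norm_num

lemma cc_mem_S (n : ℕ) (hn : 2 ≤ n) : cc n ∈ S n := by
  refine Finset.mem_image.mpr ⟨n, Finset.mem_range.mpr (by omega), ?_⟩
  rw [F, if_neg (by omega), if_neg (by omega)]
  exact n_smul_x3 n hn

lemma cc_ne_x3 (n : ℕ) (hn : 2 ≤ n) : cc n ≠ x3 n := by
  have hn0 : n ≠ 0 := by omega
  intro h
  rw [cc_eq, x3, mk_eq n hn0] at h
  obtain ⟨-, -, h3⟩ := h
  simp only at h3
  omega


/-- if `I ⊆ L` is finite with `0 ∈ I`, each `x ∈ I` satisfies `0 ≤ x ≤ c`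
or `x = x₁ - x₂`, `I` contains no pair `{k·x₃, x₁ - x₂}` with `k ≥ 1`, and `|I| = n + 3`,
then `I = {x : 0 ≤ x ≤ c}`. -/
theorem tilting_line_bundle_index_set (n : ℕ) (hn : 2 ≤ n) (I : Finset (L n))
    (h0 : (0 : L n) ∈ I)
    (hall : ∀ x ∈ I, (leL n 0 x ∧ leL n x (cc n)) ∨ x = x1 n - x2 n)
    (hpair : ∀ k : ℤ, 1 ≤ k → ¬(k • x3 n ∈ I ∧ x1 n - x2 n ∈ I))
    (hcard : I.card = n + 3) :
    (I : Set (L n)) = {x : L n | leL n 0 x ∧ leL n x (cc n)} := by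
  have hSet : ∀ x : L n, x ∈ S n ↔ (leL n 0 x ∧ leL n x (cc n)) := by
    intro x
    constructor
    · intro hx
      obtain ⟨k, hk, rfl⟩ := Finset.mem_image.mp hx
      exact F_interval n hn k (Finset.mem_range.mp hk)
    · rintro ⟨h1, h2⟩
      exact interval_mem_S n hn x h1 h2
  by_cases hw : x1 n - x2 n ∈ I
  · exfalso
    have hx3 : x3 n ∉ I := by
      intro h
      exact hpair 1 le_rfl ⟨by rwa [one_smul], hw⟩
    have hsub : I ⊆ insert (x1 n - x2 n) ((S n).erase (x3 n)) := by
      intro x hx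
      rcases hall x hx with h | rfl
      · refine Finset.mem_insert_of_mem (Finset.mem_erase.mpr ⟨?_, (hSet x).mpr h⟩)
        rintro rfl
        exact hx3 hx
      · exact Finset.mem_insert_self _ _
    have hcardle : (insert (x1 n - x2 n) ((S n).erase (x3 n))).card ≤ n + 3 := by
      calc (insert (x1 n - x2 n) ((S n).erase (x3 n))).card
          ≤ ((S n).erase (x3 n)).card + 1 := Finset.card_insert_le _ _
        _ = (S n).card - 1 + 1 := by rw [Finset.card_erase_of_mem (x3_mem_S n hn)]
        _ ≤ n + 3 := by rw [S_card n hn]; omega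
    have hIeq : I = insert (x1 n - x2 n) ((S n).erase (x3 n)) :=
      Finset.eq_of_subset_of_card_le hsub (by omega)
    have hccI : cc n ∈ I := by
      rw [hIeq]
      exact Finset.mem_insert_of_mem (Finset.mem_erase.mpr ⟨cc_ne_x3 n hn, cc_mem_S n hn⟩)
    refine hpair (n : ℤ) (by exact_mod_cast Nat.one_le_of_lt hn) ⟨?_, hw⟩
    rwa [n_smul_x3 n hn]
  · have hsub : I ⊆ S n := by
      intro x hx
      rcases hall x hx with h | rfl
      · exact (hSet x).mpr h
      · exact absurd hx hw
    have hIeq : I = S n :=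
      Finset.eq_of_subset_of_card_le hsub (by rw [S_card n hn, hcard])
    rw [hIeq]
    ext x
    simpa using hSet x
end
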